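/- Let G be a profinite (compact totally disconnected) group and let γ ∈ G be an element such that the sequence γ^(p^n) converges to the identity (γ is topologically p-unipotent) for a prime p. Then γ is contained in a pro-p subgroup of the closure of the subgroup generated by γ. -/

import Mathlib

open Filter Topology Pointwise

/-- An element of a topological group is *topologically `p`-unipotent* if the
sequence `γ ^ (p ^ n)` converges to the identity. -/
def TopPUnipotent {G : Type*} [Group G] [TopologicalSpace G] (p : ℕ) (γ : G) : Prop :=
  Tendsto (fun n : ℕ => γ ^ (p ^ n)) atTop (𝓝 1)

/-- A topologically `p`-unipotent element of a profinite group lies in a pro-`p`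
subgroup of the closure of the subgroup it generates (pro-`p`: closed, and every
open subgroup of the ambient group has `p`-power relative index in it). -/
theorem top_p_unipotent_mem_pro_p_subgroup
    {G : Type*} [Group G] [TopologicalSpace G] [IsTopologicalGroup G]
    [CompactSpace G] [TotallyDisconnectedSpace G] [T2Space G]
    (p : ℕ) (hp : p.Prime) (γ : G) (hγ : TopPUnipotent p γ) :
    ∃ H : Subgroup G, γ ∈ H ∧
      (H : Set G) ⊆ closure ((Subgroup.zpowers γ : Subgroup G) : Set G) ∧
      IsClosed (H : Set G) ∧
      ∀ U : Subgroup G, IsOpen (U : Set G) → ∃ m : ℕ, U.relIndex H = p ^ m := by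
  set C := (Subgroup.zpowers γ).topologicalClosure with hC
  have hγC : γ ∈ C := (Subgroup.zpowers γ).le_topologicalClosure (Subgroup.mem_zpowers γ)
  refine ⟨C, hγC, ?_, ?_, ?_⟩
  · rw [Subgroup.topologicalClosure_coe]
  · exact (Subgroup.zpowers γ).isClosed_topologicalClosure
  · intro U hU
    have h1U : (1 : G) ∈ U := U.one_mem
    -- find n with γ ^ (p ^ n) ∈ U
    have hUn : (U : Set G) ∈ 𝓝 (1 : G) := hU.mem_nhds h1U
    obtain ⟨n, hn⟩ := (hγ.eventually_mem hUn).exists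
    -- work in the quotient; C is commutative so the quotient is a group
    have hcomm : ∀ a b : ↥C, a * b = b * a := fun a b =>
      letI := (Subgroup.zpowers γ).commGroupTopologicalClosure
        (fun x y : ↥(Subgroup.zpowers γ) => (Subgroup.zpowers_isMulCommutative γ).is_comm.comm x y)
      mul_comm a b
    haveI : (U.subgroupOf C).Normal :=
      ⟨fun n hn g => by rw [hcomm g n, mul_inv_cancel_right]; exact hn⟩
    set γ' : C := ⟨γ, hγC⟩ with hγ'
    set x : C ⧸ U.subgroupOf C := QuotientGroup.mk γ' with hx
    have htop : Subgroup.zpowers x = ⊤ := by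
      rw [eq_top_iff]
      intro q _
      induction q using QuotientGroup.induction_on with
      | H h =>
        -- h : C, find k with h⁻¹ * γ^k ∈ U
        have hmem : (h : G) ∈ closure ((Subgroup.zpowers γ : Subgroup G) : Set G) := h.2
        have hopen : IsOpen ((h : G) • (U : Set G)) := hU.smul _
        have hself : (h : G) ∈ (h : G) • (U : Set G) := by
          refine ⟨1, h1U, by simp⟩
        obtain ⟨g, hg1, hg2⟩ := mem_closure_iff.mp hmem _ hopen hself
        obtain ⟨k, rfl⟩ := hg2
        obtain ⟨u, hu, huEq⟩ := hg1
        refine ⟨k, ?_⟩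
        show x ^ k = QuotientGroup.mk h
        have : x ^ k = QuotientGroup.mk (γ' ^ k) := by
          simp [hx]
        rw [this]
        refine (QuotientGroup.eq).mpr ?_
        have : (γ' ^ k)⁻¹ * h ∈ U.subgroupOf C := by
          show ((γ' ^ k)⁻¹ * h : C) ∈ U.subgroupOf C
          rw [Subgroup.mem_subgroupOf]
          have hval : (((γ' ^ k)⁻¹ * h : C) : G) = (γ ^ k)⁻¹ * (h : G) := by
            simp [hγ']
          rw [hval]
          have hge : (γ ^ k : G) = (h : G) * u := by
            have := huEq
            simpa [smul_eq_mul] using this.symm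
          rw [hge]
          simpa using U.inv_mem hu
        exact this
    have hcard : U.relIndex C = orderOf x := by
      have h1 : U.relIndex C = Nat.card (C ⧸ U.subgroupOf C) := rfl
      rw [h1, ← Nat.card_zpowers x, htop, Subgroup.card_top]
    have hdvd : orderOf x ∣ p ^ n := by
      apply orderOf_dvd_of_pow_eq_one
      have : x ^ (p ^ n) = QuotientGroup.mk (γ' ^ (p ^ n)) := by simp [hx]
      rw [this, QuotientGroup.eq_one_iff]
      rw [Subgroup.mem_subgroupOf]
      simpa [hγ'] using hn
    obtain ⟨m, _, hm⟩ := (Nat.dvd_prime_pow hp).mp (hcard ▸ hdvd)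
    exact ⟨m, hm⟩
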